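/- Let S be a convex set in ℝⁿ whose interior contains the origin, and suppose there exists a point x on the boundary of S at minimum L¹-distance d > 0 from the origin (i.e., d = Σᵢ|xᵢ| is minimal over all boundary points). Then there exists a boundary point of S with exactly one nonzero component whose L¹-distance to the origin equals d. -/

import Mathlib

/-- Minimum L¹-distance projection onto the boundary of a convex set is achieved
by a point with exactly one nonzero component. -/
theorem min_L1_projection_unidimensional {n : ℕ} (S : Set (Fin n → ℝ))
    (hS : Convex ℝ S) (h0 : (0 : Fin n → ℝ) ∈ interior S)
    (d : ℝ) (hd : 0 < d)
    (x : Fin n → ℝ) (hx : x ∈ frontier S) (hxd : ∑ i, |x i| = d)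
    (hmin : ∀ y ∈ frontier S, d ≤ ∑ i, |y i|) :
    ∃ z ∈ frontier S, (∃! i, z i ≠ 0) ∧ ∑ i, |z i| = d := by
  -- Step 1: every point with L¹ norm < d is in the interior of S.
  have key : ∀ y : Fin n → ℝ, ∑ i, |y i| < d → y ∈ interior S := by
    intro y hy
    by_contra hyi
    by_cases hyc : y ∈ closure S
    · exact absurd (hmin y ⟨hyc, hyi⟩) (not_le.mpr hy)
    · -- segment from 0 to y meets the frontier
      have hseg : IsPreconnected (segment ℝ (0 : Fin n → ℝ) y) :=
        (convex_segment _ _).isPreconnected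
      have hcover : segment ℝ (0 : Fin n → ℝ) y ⊆ interior S ∪ (closure S)ᶜ := by
        intro z hz
        by_cases hzi : z ∈ interior S
        · exact Or.inl hzi
        by_cases hzc : z ∈ closure S
        · exfalso
          have hzf : z ∈ frontier S := ⟨hzc, hzi⟩
          have : d ≤ ∑ i, |z i| := hmin z hzf
          obtain ⟨a, b, ha, hb, hab, hzeq⟩ := hz
          have hzle : ∑ i, |z i| ≤ ∑ i, |y i| := by
            rw [← hzeq]
            calc ∑ i, |a • (0 : Fin n → ℝ) i + b • y i| ≤ ∑ i, |b • y i| := by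
                  apply Finset.sum_le_sum
                  intro i _
                  simp [abs_mul, abs_of_nonneg ha, abs_of_nonneg hb]
              _ = b * ∑ i, |y i| := by
                  rw [Finset.mul_sum]
                  congr 1; funext i; simp [abs_mul, abs_of_nonneg hb]
              _ ≤ 1 * ∑ i, |y i| := by
                  apply mul_le_mul_of_nonneg_right _ (Finset.sum_nonneg fun i _ => abs_nonneg _)
                  linarith
              _ = ∑ i, |y i| := one_mul _
          linarith
        · exact Or.inr hzc
      have h1 : (segment ℝ (0 : Fin n → ℝ) y ∩ interior S).Nonempty :=
        ⟨0, left_mem_segment _ _ _, h0⟩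
      have h2 : (segment ℝ (0 : Fin n → ℝ) y ∩ (closure S)ᶜ).Nonempty :=
        ⟨y, right_mem_segment _ _ _, hyc⟩
      obtain ⟨z, _, hz1, hz2⟩ := hseg (interior S) (closure S)ᶜ isOpen_interior
        isClosed_closure.isOpen_compl hcover h1 h2
      exact hz2 (subset_closure (interior_subset hz1))
  -- Step 2: for any vector v with L¹ norm = d, v ∈ closure S.
  have keycl : ∀ v : Fin n → ℝ, ∑ i, |v i| = d → v ∈ closure S := by
    intro v hv
    have : Filter.Tendsto (fun t : ℝ => t • v) (nhdsWithin 1 (Set.Iio 1)) (nhds v) := by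
      have := (continuous_id.smul (continuous_const (y := v)) : Continuous fun t : ℝ => t • v).tendsto (1 : ℝ)
      have h' : Filter.Tendsto (fun t : ℝ => t • v) (nhds 1) (nhds ((1:ℝ) • v)) := this
      rw [one_smul] at h'
      exact h'.mono_left nhdsWithin_le_nhds
    refine mem_closure_of_tendsto this ?_
    filter_upwards [Ioo_mem_nhdsLT_of_mem (by norm_num : (1:ℝ) ∈ Set.Ioc 0 1)] with t ht
    apply interior_subset
    apply key
    have : ∑ i, |(t • v) i| = t * ∑ i, |v i| := by
      rw [Finset.mul_sum]; congr 1; funext i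
      simp [abs_mul, abs_of_nonneg (le_of_lt ht.1)]
    rw [this, hv]
    nlinarith [ht.1, ht.2]
  -- Step 3: some ± d • single i is not in the interior of S.
  have hnotall : ¬ (∀ i : Fin n, (Pi.single i d : Fin n → ℝ) ∈ interior S ∧
      (Pi.single i (-d) : Fin n → ℝ) ∈ interior S) := by
    intro hall
    -- then x would be in the interior, contradicting x ∈ frontier S.
    have hxint : x ∈ interior S := by
      have hconv : Convex ℝ (interior S) := hS.interior
      have := hconv.sum_mem (t := Finset.univ)
        (w := fun i => |x i| / d)
        (z := fun i => (Pi.single i (if x i < 0 then -d else d) : Fin n → ℝ))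
        (fun i _ => div_nonneg (abs_nonneg _) hd.le)
        (by rw [← Finset.sum_div, hxd, div_self hd.ne'])
        (fun i _ => by by_cases h : x i < 0 <;> simp [h, (hall i).1, (hall i).2])
      convert this using 1
      funext j
      rw [Finset.sum_apply]
      rw [Finset.sum_eq_single j]
      · simp only [Pi.smul_apply, Pi.single_eq_same, smul_eq_mul]
        by_cases h : x j < 0
        · rw [if_pos h, abs_of_neg h]; field_simp
        · rw [if_neg h, abs_of_nonneg (not_lt.mp h)]; field_simp
      · intro i _ hij
        simp [Pi.single_eq_of_ne (Ne.symm hij)]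
      · intro h; exact absurd (Finset.mem_univ j) h
    exact hx.2 hxint
  push_neg at hnotall
  obtain ⟨i, hi⟩ := hnotall
  -- the candidate point
  have habs : ∀ c : ℝ, |c| = d → ∑ j, |(Pi.single i c : Fin n → ℝ) j| = d := by
    intro c hc
    rw [Finset.sum_eq_single i]
    · rw [Pi.single_eq_same, hc]
    · intro j _ hj; rw [Pi.single_eq_of_ne hj, abs_zero]
    · intro h; exact absurd (Finset.mem_univ i) h
  have hexu : ∀ c : ℝ, c ≠ 0 → ∃! j, (Pi.single i c : Fin n → ℝ) j ≠ 0 := by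
    intro c hc
    refine ⟨i, by simpa using hc, fun j hj => ?_⟩
    by_contra hji
    exact hj (by simp [Pi.single_eq_of_ne hji])
  rcases Classical.em ((Pi.single i d : Fin n → ℝ) ∈ interior S) with h | h
  · -- then the negative one is not in the interior
    rcases hi h with h'
    refine ⟨Pi.single i (-d), ⟨keycl _ (habs _ (by rw [abs_neg, abs_of_pos hd])), h'⟩,
      hexu _ (by linarith), habs _ (by rw [abs_neg, abs_of_pos hd])⟩
  · refine ⟨Pi.single i d, ⟨keycl _ (habs _ (abs_of_pos hd)), h⟩,
      hexu _ hd.ne', habs _ (abs_of_pos hd)⟩
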